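/- Let k ≥ 2 be an integer, q = e^{2πi/(k+2)}, R̃ = diag(i q^{-1/2}, -i q^{1/2}), and F = (√q/(q+1))·[[-1, √(q+1/q+1)], [√(q+1/q+1), 1]]. Set A = R̃² F R̃⁴ F and B = R̃² F R̃⁶ F. Then the commutator W = A B A⁻¹ B⁻¹ has trace tr(W) = 4 - 2cos(6π/(k+2)) + 6cos(4π/(k+2)) - 6cos(2π/(k+2)). -/

import Mathlib

open Complex Matrix

set_option maxHeartbeats 2000000 in
theorem trace_W (k : ℕ) (hk : 2 ≤ k)
    (q : ℂ) (hq : q = Complex.exp (2 * Real.pi * Complex.I / ((k : ℂ) + 2)))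
    (sq : ℂ) (hsq : sq = Complex.exp (Real.pi * Complex.I / ((k : ℂ) + 2)))
    (s : ℂ) (hs : s ^ 2 = q + q⁻¹ + 1)
    (R F A B W : Matrix (Fin 2) (Fin 2) ℂ)
    (hR : R = !![Complex.I * sq⁻¹, 0; 0, -Complex.I * sq])
    (hF : F = (sq / (q + 1)) • !![-1, s; s, 1])
    (hA : A = R ^ 2 * F * R ^ 4 * F)
    (hB : B = R ^ 2 * F * R ^ 6 * F)
    (hW : W = A * B * A⁻¹ * B⁻¹) :
    W.trace = 4 - 2 * Real.cos (6 * Real.pi / ((k : ℝ) + 2))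
      + 6 * Real.cos (4 * Real.pi / ((k : ℝ) + 2))
      - 6 * Real.cos (2 * Real.pi / ((k : ℝ) + 2)) := by
  have hsq0 : sq ≠ 0 := by rw [hsq]; exact Complex.exp_ne_zero _
  have hq2 : q = sq ^ 2 := by
    rw [hq, hsq, ← Complex.exp_nat_mul]
    congr 1
    push_cast
    ring
  have hN : ((k : ℂ) + 2) ≠ 0 := by
    have h : ((k : ℂ) + 2) = ((k + 2 : ℕ) : ℂ) := by push_cast; ring
    rw [h]
    exact Nat.cast_ne_zero.mpr (by omega)
  have hq1 : q + 1 ≠ 0 := by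
    intro h
    have hqe : Complex.exp (2 * Real.pi * Complex.I / ((k : ℂ) + 2))
        = Complex.exp (Real.pi * Complex.I) := by
      rw [← hq, Complex.exp_pi_mul_I]
      exact eq_neg_of_add_eq_zero_left h
    rw [Complex.exp_eq_exp_iff_exists_int] at hqe
    obtain ⟨m, hm⟩ := hqe
    have hπI : (Real.pi : ℂ) * Complex.I ≠ 0 :=
      mul_ne_zero (Complex.ofReal_ne_zero.mpr Real.pi_ne_zero) Complex.I_ne_zero
    have key : (2 : ℂ) = (1 + 2 * (m : ℂ)) * ((k : ℂ) + 2) := by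
      apply mul_left_cancel₀ hπI
      field_simp at hm
      linear_combination (↑Real.pi * Complex.I) * hm
    have key2 : (2 : ℤ) = (1 + 2 * m) * ((k : ℤ) + 2) := by exact_mod_cast key
    have hdvd : ((k : ℤ) + 2) ∣ 2 := ⟨1 + 2 * m, by linarith⟩
    have := Int.le_of_dvd (by norm_num) hdvd
    omega
  -- cosine identities
  have h1 : ((Real.cos (2 * Real.pi / ((k : ℝ) + 2)) : ℝ) : ℂ) * 2 = q ^ 1 + (q ^ 1)⁻¹ := by
    rw [Complex.ofReal_cos, mul_comm, Complex.two_cos, hq, ← Complex.exp_nat_mul,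
      ← Complex.exp_neg]
    congr 2 <;> push_cast <;> ring
  have h2 : ((Real.cos (4 * Real.pi / ((k : ℝ) + 2)) : ℝ) : ℂ) * 2 = q ^ 2 + (q ^ 2)⁻¹ := by
    rw [Complex.ofReal_cos, mul_comm, Complex.two_cos, hq, ← Complex.exp_nat_mul,
      ← Complex.exp_neg]
    congr 2 <;> push_cast <;> ring
  have h3 : ((Real.cos (6 * Real.pi / ((k : ℝ) + 2)) : ℝ) : ℂ) * 2 = q ^ 3 + (q ^ 3)⁻¹ := by
    rw [Complex.ofReal_cos, mul_comm, Complex.two_cos, hq, ← Complex.exp_nat_mul,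
      ← Complex.exp_neg]
    congr 2 <;> push_cast <;> ring
  -- main trace computation
  have main : W.trace = 4 - (q ^ 3 + (q⁻¹) ^ 3) + 3 * (q ^ 2 + (q⁻¹) ^ 2) - 3 * (q + q⁻¹) := by
    rw [hq2] at hs hF hq1 ⊢
    have hd : sq ^ 2 + 1 ≠ 0 := hq1
    have hs' : s ^ 2 * sq ^ 2 = sq ^ 4 + sq ^ 2 + 1 := by
      rw [hs]; field_simp; ring
    have hdd : (sq ^ 2 + 1) * (sq ^ 2 + 1) ≠ 0 := mul_ne_zero hd hd
    have hDA : sq ^ 4 * (sq ^ 2 + 1) ^ 2 ≠ 0 :=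
      mul_ne_zero (pow_ne_zero _ hsq0) (pow_ne_zero _ hd)
    have hDB : sq ^ 6 * (sq ^ 2 + 1) ^ 2 ≠ 0 :=
      mul_ne_zero (pow_ne_zero _ hsq0) (pow_ne_zero _ hd)
    have hR2 : R ^ 2 = !![-sq⁻¹ ^ 2, 0; 0, -sq ^ 2] := by
      rw [hR, pow_two]
      ext i j
      fin_cases i <;> fin_cases j <;>
        simp [Matrix.mul_apply, Fin.sum_univ_two] <;>
        ring_nf <;> simp [Complex.I_sq] <;> ring
    have hR4 : R ^ 4 = !![sq⁻¹ ^ 4, 0; 0, sq ^ 4] := by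
      rw [show (4 : ℕ) = 2 + 2 from rfl, pow_add, hR2]
      ext i j
      fin_cases i <;> fin_cases j <;>
        simp [Matrix.mul_apply, Fin.sum_univ_two] <;> ring
    have hR6 : R ^ 6 = !![-sq⁻¹ ^ 6, 0; 0, -sq ^ 6] := by
      rw [show (6 : ℕ) = 2 + 4 from rfl, pow_add, hR2, hR4]
      ext i j
      fin_cases i <;> fin_cases j <;>
        simp [Matrix.mul_apply, Fin.sum_univ_two] <;> ring
    have hA2 : A = !![sq ^ 2 * (-sq⁻¹ ^ 6 - s ^ 2 * sq⁻¹ ^ 2 * sq ^ 4) / (sq ^ 2 + 1) / (sq ^ 2 + 1),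
        sq ^ 2 * (s * (sq⁻¹ ^ 6 - sq⁻¹ ^ 2 * sq ^ 4)) / (sq ^ 2 + 1) / (sq ^ 2 + 1);
        sq ^ 2 * (s * (sq ^ 2 * sq⁻¹ ^ 4 - sq ^ 6)) / (sq ^ 2 + 1) / (sq ^ 2 + 1),
        sq ^ 2 * (-(s ^ 2 * sq ^ 2 * sq⁻¹ ^ 4) - sq ^ 6) / (sq ^ 2 + 1) / (sq ^ 2 + 1)] := by
      rw [hA, hR2, hR4, hF]
      ext i j
      fin_cases i <;> fin_cases j <;>
        simp [Matrix.mul_apply, Fin.sum_univ_two, Matrix.smul_apply, smul_eq_mul] <;> ring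
    have hB2 : B = !![sq ^ 2 * (sq⁻¹ ^ 8 + s ^ 2 * sq⁻¹ ^ 2 * sq ^ 6) / (sq ^ 2 + 1) / (sq ^ 2 + 1),
        sq ^ 2 * (s * (sq⁻¹ ^ 2 * sq ^ 6 - sq⁻¹ ^ 8)) / (sq ^ 2 + 1) / (sq ^ 2 + 1);
        sq ^ 2 * (s * (sq ^ 8 - sq ^ 2 * sq⁻¹ ^ 6)) / (sq ^ 2 + 1) / (sq ^ 2 + 1),
        sq ^ 2 * (s ^ 2 * sq ^ 2 * sq⁻¹ ^ 6 + sq ^ 8) / (sq ^ 2 + 1) / (sq ^ 2 + 1)] := by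
      rw [hB, hR2, hR6, hF]
      ext i j
      fin_cases i <;> fin_cases j <;>
        simp [Matrix.mul_apply, Fin.sum_univ_two, Matrix.smul_apply, smul_eq_mul] <;> ring
    have hA' : A = !![-(1 + s ^ 2 * sq ^ 8) / (sq ^ 4 * (sq ^ 2 + 1) ^ 2),
        s * (1 - sq ^ 8) / (sq ^ 4 * (sq ^ 2 + 1) ^ 2);
        s * (sq ^ 4 - sq ^ 12) / (sq ^ 4 * (sq ^ 2 + 1) ^ 2),
        -(s ^ 2 * sq ^ 4 + sq ^ 12) / (sq ^ 4 * (sq ^ 2 + 1) ^ 2)] := by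
      rw [hA2]
      ext i j
      fin_cases i <;> fin_cases j <;>
        simp only [Fin.zero_eta, Fin.mk_one, Fin.isValue, Matrix.of_apply, Matrix.cons_val', Matrix.cons_val_zero, Matrix.cons_val_one, Matrix.head_cons,
          Matrix.empty_val', Matrix.cons_val_fin_one, Matrix.head_fin_const] <;>
        rw [div_div, div_eq_div_iff hdd hDA] <;> field_simp <;> ring
    have hB' : B = !![(1 + s ^ 2 * sq ^ 12) / (sq ^ 6 * (sq ^ 2 + 1) ^ 2),
        s * (sq ^ 12 - 1) / (sq ^ 6 * (sq ^ 2 + 1) ^ 2);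
        s * (sq ^ 16 - sq ^ 4) / (sq ^ 6 * (sq ^ 2 + 1) ^ 2),
        (s ^ 2 * sq ^ 4 + sq ^ 16) / (sq ^ 6 * (sq ^ 2 + 1) ^ 2)] := by
      rw [hB2]
      ext i j
      fin_cases i <;> fin_cases j <;>
        simp only [Fin.zero_eta, Fin.mk_one, Fin.isValue, Matrix.of_apply, Matrix.cons_val', Matrix.cons_val_zero, Matrix.cons_val_one, Matrix.head_cons,
          Matrix.empty_val', Matrix.cons_val_fin_one, Matrix.head_fin_const] <;>
        rw [div_div, div_eq_div_iff hdd hDB] <;> field_simp <;> ring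
    have hdA : A.det = 1 := by
      rw [hA', Matrix.det_fin_two_of]
      field_simp
      linear_combination (sq ^ 4 + 3 * sq ^ 6 + sq ^ 8 + s ^ 2 * sq ^ 6) * hs'
    have hdB : B.det = 1 := by
      rw [hB', Matrix.det_fin_two_of]
      field_simp
      linear_combination (sq ^ 8 + 3 * sq ^ 10 + sq ^ 12 + s ^ 2 * sq ^ 10) * hs'
    have hAinv : A⁻¹ = !![-(s ^ 2 * sq ^ 4 + sq ^ 12) / (sq ^ 4 * (sq ^ 2 + 1) ^ 2),
        -(s * (1 - sq ^ 8) / (sq ^ 4 * (sq ^ 2 + 1) ^ 2));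
        -(s * (sq ^ 4 - sq ^ 12) / (sq ^ 4 * (sq ^ 2 + 1) ^ 2)),
        -(1 + s ^ 2 * sq ^ 8) / (sq ^ 4 * (sq ^ 2 + 1) ^ 2)] := by
      refine Matrix.inv_eq_right_inv ?_
      rw [← Matrix.adjugate_fin_two_of, ← hA', Matrix.mul_adjugate, hdA, one_smul]
    have hBinv : B⁻¹ = !![(s ^ 2 * sq ^ 4 + sq ^ 16) / (sq ^ 6 * (sq ^ 2 + 1) ^ 2),
        -(s * (sq ^ 12 - 1) / (sq ^ 6 * (sq ^ 2 + 1) ^ 2));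
        -(s * (sq ^ 16 - sq ^ 4) / (sq ^ 6 * (sq ^ 2 + 1) ^ 2)),
        (1 + s ^ 2 * sq ^ 12) / (sq ^ 6 * (sq ^ 2 + 1) ^ 2)] := by
      refine Matrix.inv_eq_right_inv ?_
      rw [← Matrix.adjugate_fin_two_of, ← hB', Matrix.mul_adjugate, hdB, one_smul]
    have hP1 : (sq ^ 4 * (sq ^ 2 + 1) ^ 2) • A = !![-(1 + s ^ 2 * sq ^ 8), s * (1 - sq ^ 8);
        s * (sq ^ 4 - sq ^ 12), -(s ^ 2 * sq ^ 4 + sq ^ 12)] := by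
      rw [hA']
      ext i j
      fin_cases i <;> fin_cases j <;>
        simp only [Fin.zero_eta, Fin.mk_one, Fin.isValue, Matrix.of_apply, Matrix.cons_val',
          Matrix.cons_val_zero, Matrix.cons_val_one, Matrix.head_cons, Matrix.empty_val',
          Matrix.cons_val_fin_one, Matrix.head_fin_const, Matrix.smul_apply, smul_eq_mul] <;>
        field_simp <;> ring
    have hP2 : (sq ^ 6 * (sq ^ 2 + 1) ^ 2) • B = !![1 + s ^ 2 * sq ^ 12, s * (sq ^ 12 - 1);
        s * (sq ^ 16 - sq ^ 4), s ^ 2 * sq ^ 4 + sq ^ 16] := by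
      rw [hB']
      ext i j
      fin_cases i <;> fin_cases j <;>
        simp only [Fin.zero_eta, Fin.mk_one, Fin.isValue, Matrix.of_apply, Matrix.cons_val',
          Matrix.cons_val_zero, Matrix.cons_val_one, Matrix.head_cons, Matrix.empty_val',
          Matrix.cons_val_fin_one, Matrix.head_fin_const, Matrix.smul_apply, smul_eq_mul] <;>
        field_simp <;> ring
    have hP3 : (sq ^ 4 * (sq ^ 2 + 1) ^ 2) • A⁻¹ = !![-(s ^ 2 * sq ^ 4 + sq ^ 12), -(s * (1 - sq ^ 8));
        -(s * (sq ^ 4 - sq ^ 12)), -(1 + s ^ 2 * sq ^ 8)] := by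
      rw [hAinv]
      ext i j
      fin_cases i <;> fin_cases j <;>
        simp only [Fin.zero_eta, Fin.mk_one, Fin.isValue, Matrix.of_apply, Matrix.cons_val',
          Matrix.cons_val_zero, Matrix.cons_val_one, Matrix.head_cons, Matrix.empty_val',
          Matrix.cons_val_fin_one, Matrix.head_fin_const, Matrix.smul_apply, smul_eq_mul] <;>
        field_simp <;> ring
    have hP4 : (sq ^ 6 * (sq ^ 2 + 1) ^ 2) • B⁻¹ = !![s ^ 2 * sq ^ 4 + sq ^ 16, -(s * (sq ^ 12 - 1));
        -(s * (sq ^ 16 - sq ^ 4)), 1 + s ^ 2 * sq ^ 12] := by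
      rw [hBinv]
      ext i j
      fin_cases i <;> fin_cases j <;>
        simp only [Fin.zero_eta, Fin.mk_one, Fin.isValue, Matrix.of_apply, Matrix.cons_val',
          Matrix.cons_val_zero, Matrix.cons_val_one, Matrix.head_cons, Matrix.empty_val',
          Matrix.cons_val_fin_one, Matrix.head_fin_const, Matrix.smul_apply, smul_eq_mul] <;>
        field_simp <;> ring
    have key : ((sq ^ 4 * (sq ^ 2 + 1) ^ 2) * (sq ^ 6 * (sq ^ 2 + 1) ^ 2) * (sq ^ 4 * (sq ^ 2 + 1) ^ 2)
          * (sq ^ 6 * (sq ^ 2 + 1) ^ 2)) • W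
        = !![-(1 + s ^ 2 * sq ^ 8), s * (1 - sq ^ 8); s * (sq ^ 4 - sq ^ 12), -(s ^ 2 * sq ^ 4 + sq ^ 12)]
          * !![1 + s ^ 2 * sq ^ 12, s * (sq ^ 12 - 1); s * (sq ^ 16 - sq ^ 4), s ^ 2 * sq ^ 4 + sq ^ 16]
          * !![-(s ^ 2 * sq ^ 4 + sq ^ 12), -(s * (1 - sq ^ 8)); -(s * (sq ^ 4 - sq ^ 12)), -(1 + s ^ 2 * sq ^ 8)]
          * !![s ^ 2 * sq ^ 4 + sq ^ 16, -(s * (sq ^ 12 - 1)); -(s * (sq ^ 16 - sq ^ 4)), 1 + s ^ 2 * sq ^ 12] := by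
      rw [hW, ← hP1, ← hP2, ← hP3, ← hP4]
      simp only [Matrix.smul_mul, Matrix.mul_smul, smul_smul]
      congr 1
      ring
    have htrace : ((sq ^ 4 * (sq ^ 2 + 1) ^ 2) * (sq ^ 6 * (sq ^ 2 + 1) ^ 2) * (sq ^ 4 * (sq ^ 2 + 1) ^ 2)
          * (sq ^ 6 * (sq ^ 2 + 1) ^ 2)) * W.trace
        = (!![-(1 + s ^ 2 * sq ^ 8), s * (1 - sq ^ 8); s * (sq ^ 4 - sq ^ 12), -(s ^ 2 * sq ^ 4 + sq ^ 12)]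
          * !![1 + s ^ 2 * sq ^ 12, s * (sq ^ 12 - 1); s * (sq ^ 16 - sq ^ 4), s ^ 2 * sq ^ 4 + sq ^ 16]
          * !![-(s ^ 2 * sq ^ 4 + sq ^ 12), -(s * (1 - sq ^ 8)); -(s * (sq ^ 4 - sq ^ 12)), -(1 + s ^ 2 * sq ^ 8)]
          * !![s ^ 2 * sq ^ 4 + sq ^ 16, -(s * (sq ^ 12 - 1)); -(s * (sq ^ 16 - sq ^ 4)), 1 + s ^ 2 * sq ^ 12]).trace := by
      rw [← key, Matrix.trace_smul, smul_eq_mul]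
    have htr2 : (!![-(1 + s ^ 2 * sq ^ 8), s * (1 - sq ^ 8); s * (sq ^ 4 - sq ^ 12), -(s ^ 2 * sq ^ 4 + sq ^ 12)]
          * !![1 + s ^ 2 * sq ^ 12, s * (sq ^ 12 - 1); s * (sq ^ 16 - sq ^ 4), s ^ 2 * sq ^ 4 + sq ^ 16]
          * !![-(s ^ 2 * sq ^ 4 + sq ^ 12), -(s * (1 - sq ^ 8)); -(s * (sq ^ 4 - sq ^ 12)), -(1 + s ^ 2 * sq ^ 8)]
          * !![s ^ 2 * sq ^ 4 + sq ^ 16, -(s * (sq ^ 12 - 1)); -(s * (sq ^ 16 - sq ^ 4)), 1 + s ^ 2 * sq ^ 12]).trace * sq ^ 6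
        = ((sq ^ 4 * (sq ^ 2 + 1) ^ 2) * (sq ^ 6 * (sq ^ 2 + 1) ^ 2) * (sq ^ 4 * (sq ^ 2 + 1) ^ 2)
          * (sq ^ 6 * (sq ^ 2 + 1) ^ 2))
          * (4 * sq ^ 6 - sq ^ 12 - 1 + 3 * sq ^ 10 + 3 * sq ^ 2 - 3 * sq ^ 8 - 3 * sq ^ 4) := by
      rw [Matrix.trace_fin_two]
      simp only [Matrix.mul_apply, Fin.sum_univ_two, Fin.isValue, Matrix.of_apply, Matrix.cons_val',
        Matrix.cons_val_zero, Matrix.cons_val_one, Matrix.head_cons, Matrix.empty_val',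
        Matrix.cons_val_fin_one, Matrix.head_fin_const]
      linear_combination (-1 * sq ^ 20 + -4 * sq ^ 22 + -2 * sq ^ 24 + 14 * sq ^ 26 + 31 * sq ^ 28 + 32 * sq ^ 30 + 30 * sq ^ 32 + 32 * sq ^ 34 + 31 * sq ^ 36 + 14 * sq ^ 38 + -2 * sq ^ 40 + -4 * sq ^ 42 + -1 * sq ^ 44 + -1 * s ^ 2 * sq ^ 22 + -3 * s ^ 2 * sq ^ 24 + 3 * s ^ 2 * sq ^ 26 + 14 * s ^ 2 * sq ^ 28 + 10 * s ^ 2 * sq ^ 30 + 8 * s ^ 2 * sq ^ 32 + 10 * s ^ 2 * sq ^ 34 + 14 * s ^ 2 * sq ^ 36 + 3 * s ^ 2 * sq ^ 38 + -3 * s ^ 2 * sq ^ 40 + -1 * s ^ 2 * sq ^ 42 + -1 * s ^ 4 * sq ^ 24 + 4 * s ^ 4 * sq ^ 28 + 2 * s ^ 4 * sq ^ 30 + 4 * s ^ 4 * sq ^ 32 + 2 * s ^ 4 * sq ^ 34 + 4 * s ^ 4 * sq ^ 36 + -1 * s ^ 4 * sq ^ 40 + 2 * s ^ 6 * sq ^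 32) * hs'
    have hD6 : ((sq ^ 4 * (sq ^ 2 + 1) ^ 2) * (sq ^ 6 * (sq ^ 2 + 1) ^ 2) * (sq ^ 4 * (sq ^ 2 + 1) ^ 2)
        * (sq ^ 6 * (sq ^ 2 + 1) ^ 2)) * sq ^ 6 ≠ 0 :=
      mul_ne_zero (mul_ne_zero (mul_ne_zero (mul_ne_zero hDA hDB) hDA) hDB) (pow_ne_zero _ hsq0)
    apply mul_left_cancel₀ hD6
    calc ((sq ^ 4 * (sq ^ 2 + 1) ^ 2) * (sq ^ 6 * (sq ^ 2 + 1) ^ 2) * (sq ^ 4 * (sq ^ 2 + 1) ^ 2)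
          * (sq ^ 6 * (sq ^ 2 + 1) ^ 2)) * sq ^ 6 * W.trace
        = ((sq ^ 4 * (sq ^ 2 + 1) ^ 2) * (sq ^ 6 * (sq ^ 2 + 1) ^ 2) * (sq ^ 4 * (sq ^ 2 + 1) ^ 2)
          * (sq ^ 6 * (sq ^ 2 + 1) ^ 2)) * W.trace * sq ^ 6 := by ring
      _ = ((sq ^ 4 * (sq ^ 2 + 1) ^ 2) * (sq ^ 6 * (sq ^ 2 + 1) ^ 2) * (sq ^ 4 * (sq ^ 2 + 1) ^ 2)
          * (sq ^ 6 * (sq ^ 2 + 1) ^ 2))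
          * (4 * sq ^ 6 - sq ^ 12 - 1 + 3 * sq ^ 10 + 3 * sq ^ 2 - 3 * sq ^ 8 - 3 * sq ^ 4) := by
          rw [htrace]; exact htr2
      _ = ((sq ^ 4 * (sq ^ 2 + 1) ^ 2) * (sq ^ 6 * (sq ^ 2 + 1) ^ 2) * (sq ^ 4 * (sq ^ 2 + 1) ^ 2)
          * (sq ^ 6 * (sq ^ 2 + 1) ^ 2)) * sq ^ 6
          * (4 - ((sq ^ 2) ^ 3 + ((sq ^ 2)⁻¹) ^ 3) + 3 * ((sq ^ 2) ^ 2 + ((sq ^ 2)⁻¹) ^ 2)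
            - 3 * (sq ^ 2 + (sq ^ 2)⁻¹)) := by
          field_simp
          ring
  rw [main]
  linear_combination h3 - 3 * h2 + 3 * h1
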